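/- Assume (A.1): c^{-1}E[u] ≤ E^n[u] ≤ cE[u] for all u ∈ D and n ∈ ℕ∪{∞}, and (A.2): J₁ is continuous. Suppose (E^n) Mosco-converges to E^∞ and additionally E^n[v] → E^∞[v] for every v ∈ ran K^∞, where K^n = (H^n+1)^{-1} and H^n is the operator associated with E^n. Then for every u ∈ L²(X,m), (E^n)₁[K^n u − K^∞ u] → 0 and consequently J₁^n K^n u → J₁^∞ K^∞ u in L²(X,μ), i.e., assumption (A.3) holds. -/

import Mathlib

open Filter Topology RealInnerProductSpace
open scoped Classical

/-- The extension of a quadratic form `Q` with domain `D` by `+∞` outside `D`. -/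
noncomputable def extForm {H : Type*} [NormedAddCommGroup H] [InnerProductSpace ℝ H]
    (D : Set H) (Q : H → ℝ) : H → ENNReal :=
  fun u => if u ∈ D then ENNReal.ofReal (Q u) else ⊤

/-- Mosco convergence of a sequence of (extended) positive quadratic forms. -/
def MoscoConv {H : Type*} [NormedAddCommGroup H] [InnerProductSpace ℝ H]
    (Qn : ℕ → H → ENNReal) (Q : H → ENNReal) : Prop :=
  (∀ (u : ℕ → H) (v : H),
      (∀ w : H, Tendsto (fun n => ⟪u n, w⟫) atTop (𝓝 ⟪v, w⟫)) →
      Q v ≤ Filter.liminf (fun n => Qn n (u n)) atTop) ∧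
  (∀ v : H, ∃ u : ℕ → H, Tendsto u atTop (𝓝 v) ∧
      Filter.limsup (fun n => Qn n (u n)) atTop ≤ Q v)

lemma weak_seq_cpt {H : Type*} [NormedAddCommGroup H] [InnerProductSpace ℝ H]
    [CompleteSpace H] (x : ℕ → H) (R : ℝ) (hx : ∀ n, ‖x n‖ ≤ R) :
    ∃ φ : ℕ → ℕ, StrictMono φ ∧ ∃ v : H,
      ∀ w : H, Tendsto (fun j => ⟪x (φ j), w⟫) atTop (𝓝 ⟪v, w⟫) := by
  have hR : 0 ≤ R := le_trans (norm_nonneg (x 0)) (hx 0)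
  -- Step 1: one-shot extraction via compactness of a countable product
  have hFmem : ∀ j, (fun i => ⟪x j, x i⟫) ∈ Set.pi Set.univ
      (fun _ : ℕ => Set.Icc (-(R*R)) (R*R)) := by
    intro j i _
    have h1 : |⟪x j, x i⟫| ≤ ‖x j‖ * ‖x i‖ := abs_real_inner_le_norm _ _
    have h2 : ‖x j‖ * ‖x i‖ ≤ R * R := by
      exact mul_le_mul (hx j) (hx i) (norm_nonneg _) hR
    constructor <;> [nlinarith [abs_nonneg ⟪x j, x i⟫, neg_abs_le ⟪x j, x i⟫];
      nlinarith [le_abs_self ⟪x j, x i⟫]]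
  obtain ⟨g, -, φ, hφ, hconv⟩ :=
    (isCompact_univ_pi (fun _ : ℕ => isCompact_Icc)).tendsto_subseq hFmem
  refine ⟨φ, hφ, ?_⟩
  have hgi : ∀ i, Tendsto (fun j => ⟪x (φ j), x i⟫) atTop (𝓝 (g i)) := by
    intro i
    exact (continuous_apply i).continuousAt.tendsto.comp hconv
  set y : ℕ → H := fun j => x (φ j) with hy
  -- Step 2: convergence on the span
  set S : Set H := Set.range x with hS
  have hspan : ∀ w ∈ Submodule.span ℝ S, ∃ c : ℝ,
      Tendsto (fun j => ⟪y j, w⟫) atTop (𝓝 c) := by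
    intro w hw
    induction hw using Submodule.span_induction with
    | mem w hw => obtain ⟨i, rfl⟩ := hw; exact ⟨g i, hgi i⟩
    | zero => exact ⟨0, by simpa using tendsto_const_nhds⟩
    | add a b ha hb iha ihb =>
        obtain ⟨ca, hca⟩ := iha; obtain ⟨cb, hcb⟩ := ihb
        exact ⟨ca + cb, by simpa [inner_add_right] using hca.add hcb⟩
    | smul a w hw ih =>
        obtain ⟨c, hc⟩ := ih
        exact ⟨a * c, by simpa [real_inner_smul_right] using hc.const_mul a⟩
  -- Step 3: convergence on the closure of the span
  set V : Submodule ℝ H := (Submodule.span ℝ S).topologicalClosure with hV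
  have hyV : ∀ j, y j ∈ V :=
    fun j => Submodule.le_topologicalClosure _ (Submodule.subset_span ⟨φ j, rfl⟩)
  have hclos : ∀ w ∈ V, ∃ c : ℝ, Tendsto (fun j => ⟪y j, w⟫) atTop (𝓝 c) := by
    intro w hw
    apply cauchySeq_tendsto_of_complete
    rw [Metric.cauchySeq_iff]
    intro ε hε
    have hw' : w ∈ closure (Submodule.span ℝ S : Set H) := hw
    obtain ⟨w', hw'mem, hww'⟩ := Metric.mem_closure_iff.mp hw' (ε / (4 * (R + 1)))
      (by positivity)
    obtain ⟨c, hc⟩ := hspan w' hw'mem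
    obtain ⟨N, hN⟩ := Metric.cauchySeq_iff.mp hc.cauchySeq (ε / 4) (by positivity)
    refine ⟨N, fun m hm n hn => ?_⟩
    have key : ∀ j, |⟪y j, w⟫ - ⟪y j, w'⟫| ≤ ε / 4 := by
      intro j
      have : ⟪y j, w⟫ - ⟪y j, w'⟫ = ⟪y j, w - w'⟫ := (inner_sub_right _ _ _).symm
      rw [this]
      have h1 : |⟪y j, w - w'⟫| ≤ ‖y j‖ * ‖w - w'‖ := abs_real_inner_le_norm _ _
      have h2 : ‖w - w'‖ ≤ ε / (4 * (R + 1)) := by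
        rw [← dist_eq_norm]; exact le_of_lt hww'
      have h3 : ‖y j‖ ≤ R := hx _
      have h4 : ‖y j‖ * ‖w - w'‖ ≤ R * (ε / (4 * (R + 1))) :=
        mul_le_mul h3 h2 (norm_nonneg _) hR
      have h5 : R * (ε / (4 * (R + 1))) ≤ ε / 4 := by
        rw [mul_div_assoc'] at *
        rw [div_le_div_iff₀ (by positivity) (by norm_num)]
        nlinarith
      linarith
    have hmid := hN m hm n hn
    rw [Real.dist_eq] at hmid ⊢
    have := key m; have := key n
    have : |⟪y m, w⟫ - ⟪y n, w⟫| ≤ |⟪y m, w⟫ - ⟪y m, w'⟫| + |⟪y m, w'⟫ - ⟪y n, w'⟫|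
        + |⟪y n, w'⟫ - ⟪y n, w⟫| := by
      have := abs_sub_le (⟪y m, w⟫) (⟪y m, w'⟫) (⟪y n, w⟫)
      have := abs_sub_le (⟪y m, w'⟫) (⟪y n, w'⟫) (⟪y n, w⟫)
      linarith
    have h6 := key m
    have h7 : |⟪y n, w'⟫ - ⟪y n, w⟫| ≤ ε / 4 := by
      rw [abs_sub_comm]; exact key n
    linarith
  -- Step 4: convergence everywhere, via orthogonal projection
  haveI : CompleteSpace V := (Submodule.isClosed_topologicalClosure _).completeSpace_coe
  have hall : ∀ w : H, ∃ c : ℝ, Tendsto (fun j => ⟪y j, w⟫) atTop (𝓝 c) := by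
    intro w
    obtain ⟨c, hc⟩ := hclos (V.orthogonalProjectionOnto w) (V.orthogonalProjectionOnto w).2
    refine ⟨c, hc.congr fun j => ?_⟩
    have horth : ⟪y j, w - V.orthogonalProjectionOnto w⟫ = 0 :=
      (Submodule.mem_orthogonal V _).mp (Submodule.sub_starProjection_mem_orthogonal (K := V) w) (y j) (hyV j)
    have := inner_sub_right (𝕜 := ℝ) (y j) w (V.orthogonalProjectionOnto w)
    rw [horth] at this
    linarith [this]
  -- Step 5: build the weak limit via Riesz representation
  choose l hl using hall
  have hadd : ∀ a b : H, l (a + b) = l a + l b := by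
    intro a b
    refine tendsto_nhds_unique ((hl (a + b)).congr fun j => ?_) ((hl a).add (hl b))
    · exact (inner_add_right _ _ _)
  have hsmul : ∀ (a : ℝ) (w : H), l (a • w) = a * l w := by
    intro a w
    refine tendsto_nhds_unique ((hl (a • w)).congr fun j => ?_) ((hl w).const_mul a)
    · exact (real_inner_smul_right _ _ _)
  have hbound : ∀ w : H, ‖l w‖ ≤ R * ‖w‖ := by
    intro w
    refine le_of_tendsto (hl w).norm (Eventually.of_forall fun j => ?_)
    calc ‖⟪y j, w⟫‖ ≤ ‖y j‖ * ‖w‖ := abs_real_inner_le_norm _ _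
      _ ≤ R * ‖w‖ := mul_le_mul_of_nonneg_right (hx _) (norm_nonneg _)
  set L : H →L[ℝ] ℝ := LinearMap.mkContinuous
    { toFun := l, map_add' := hadd, map_smul' := hsmul } R hbound with hLdef
  refine ⟨(InnerProductSpace.toDual ℝ H).symm L, fun w => ?_⟩
  have : ⟪(InnerProductSpace.toDual ℝ H).symm L, w⟫ = L w :=
    InnerProductSpace.toDual_symm_apply
  rw [this]
  exact hl w

lemma mosco_liminf_subseq {H : Type*} [NormedAddCommGroup H] [InnerProductSpace ℝ H]
    (Qn : ℕ → H → ENNReal) (Q : H → ENNReal)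
    (h : ∀ (u : ℕ → H) (v : H),
      (∀ w : H, Tendsto (fun n => ⟪u n, w⟫) atTop (𝓝 ⟪v, w⟫)) →
      Q v ≤ Filter.liminf (fun n => Qn n (u n)) atTop)
    (ψ : ℕ → ℕ) (hψ : StrictMono ψ) (x : ℕ → H) (v : H)
    (hx : ∀ w : H, Tendsto (fun j => ⟪x j, w⟫) atTop (𝓝 ⟪v, w⟫)) :
    Q v ≤ Filter.liminf (fun j => Qn (ψ j) (x j)) atTop := by
  set g : ℕ → ℕ := fun n => Nat.findGreatest (fun j => ψ j ≤ n) n with hg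
  have hg_at : Tendsto g atTop atTop := by
    rw [tendsto_atTop]
    intro b
    filter_upwards [eventually_ge_atTop (ψ b)] with n hn
    exact Nat.le_findGreatest (le_trans hψ.le_apply hn) hn
  have hgψ : ∀ j, g (ψ j) = j := by
    intro j
    apply Nat.findGreatest_eq_iff.mpr
    exact ⟨hψ.le_apply, fun _ => le_rfl, fun n hjn _ => not_le.mpr (hψ hjn)⟩
  have h1 : Q v ≤ Filter.liminf (fun n => Qn n (x (g n))) atTop :=
    h (fun n => x (g n)) v (fun w => (hx w).comp hg_at)
  refine h1.trans ?_
  have h2 : Filter.liminf (fun n => Qn n (x (g n))) atTop ≤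
      Filter.liminf ((fun n => Qn n (x (g n))) ∘ ψ) atTop := by
    rw [Filter.liminf_comp]
    exact Filter.liminf_le_liminf_of_le hψ.tendsto_atTop
  refine h2.trans (le_of_eq ?_)
  congr 1
  funext j
  simp [Function.comp, hgψ j]

/-- Assume (A.1) `c⁻¹ E[u] ≤ E^n[u] ≤ c E[u]` on the common domain `D`
and (A.2) continuity of `J₁`.  If `(E^n)` Mosco-converges to `E^∞` and additionally
`E^n[v] → E^∞[v]` for every `v ∈ ran K^∞` (where `K^n = (H^n+1)⁻¹` is characterized by
`K^n u ∈ D` and `(E^n)₁(K^n u, v) = ⟪u, v⟫` for `v ∈ D`), then for every `u`,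
`(E^n)₁[K^n u − K^∞ u] → 0` and hence `J₁^n K^n u → J₁^∞ K^∞ u`, i.e. (A.3) holds. -/
theorem stmt19 {H Haux : Type*} [NormedAddCommGroup H] [InnerProductSpace ℝ H]
    [CompleteSpace H] [NormedAddCommGroup Haux] [InnerProductSpace ℝ Haux]
    (D : Submodule ℝ H)
    (B : ℕ∞ → H →ₗ[ℝ] H →ₗ[ℝ] ℝ) (Bbase : H →ₗ[ℝ] H →ₗ[ℝ] ℝ)
    (hsymm : ∀ (n : ℕ∞) (u v : H), B n u v = B n v u)
    (hpos : ∀ (n : ℕ∞), ∀ u ∈ D, 0 ≤ B n u u)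
    (c : ℝ) (hc : 0 < c)
    (hA1 : ∀ n : ℕ∞, ∀ u ∈ D, c⁻¹ * Bbase u u ≤ B n u u ∧ B n u u ≤ c * Bbase u u)
    (J : H →ₗ[ℝ] Haux) (M : ℝ)
    (hA2 : ∀ u ∈ D, ‖J u‖ ≤ M * Real.sqrt (Bbase u u + ‖u‖ ^ 2))
    (K : ℕ∞ → H →L[ℝ] H)
    (hKD : ∀ (n : ℕ∞) (u : H), K n u ∈ D)
    (hKrep : ∀ (n : ℕ∞) (u : H), ∀ v ∈ D, B n (K n u) v + ⟪(K n u : H), v⟫ = ⟪u, v⟫)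
    (hMosco : MoscoConv (fun k => extForm (D : Set H) fun u => B (k : ℕ∞) u u)
        (extForm (D : Set H) fun u => B ⊤ u u))
    (hran : ∀ u : H,
        Tendsto (fun k : ℕ => B (k : ℕ∞) (K ⊤ u) (K ⊤ u)) atTop (𝓝 (B ⊤ (K ⊤ u) (K ⊤ u)))) :
    ∀ u : H,
      Tendsto (fun k : ℕ =>
          B (k : ℕ∞) (K (k : ℕ∞) u - K ⊤ u) (K (k : ℕ∞) u - K ⊤ u)
            + ‖K (k : ℕ∞) u - K ⊤ u‖ ^ 2) atTop (𝓝 0) ∧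
      Tendsto (fun k : ℕ => J (K (k : ℕ∞) u)) atTop (𝓝 (J (K ⊤ u))) := by
  intro u
  have hwD : ∀ n : ℕ∞, K n u ∈ D := fun n => hKD n u
  have hDform : ∀ n : ℕ∞, B n (K n u) (K n u) + ‖K n u‖ ^ 2 = ⟪u, (K n u : H)⟫ := by
    intro n
    have h := hKrep n u (K n u) (hwD n)
    rwa [real_inner_self_eq_norm_sq] at h
  set T : ℝ := ⟪u, (K ⊤ u : H)⟫ with hT
  set cf : ℕ → ℝ := fun k => B (k : ℕ∞) (K ⊤ u) (K ⊤ u) + ‖K ⊤ u‖ ^ 2 with hcfdef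
  have hcf : Tendsto cf atTop (𝓝 T) := by
    have h := (hran u).add (tendsto_const_nhds (x := ‖K ⊤ u‖ ^ 2))
    rwa [hDform ⊤] at h
  set f : ℕ → ℝ := fun k => ⟪u, (K (k : ℕ∞) u : H)⟫ with hfdef
  have hfpos : ∀ k : ℕ, 0 ≤ f k := by
    intro k
    have h := hDform (k : ℕ∞)
    have h1 := hpos (k : ℕ∞) (K (k : ℕ∞) u) (hwD (k : ℕ∞))
    have h2 := sq_nonneg ‖K (k : ℕ∞) u‖
    show (0 : ℝ) ≤ ⟪u, (K (k : ℕ∞) u : H)⟫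
    linarith
  have hwb : ∀ n : ℕ∞, ‖K n u‖ ≤ ‖u‖ := by
    intro n
    have h1 : ‖K n u‖ ^ 2 ≤ ⟪u, (K n u : H)⟫ := by
      rw [← hDform n]
      have := hpos n _ (hwD n); linarith
    have h2 : ⟪u, (K n u : H)⟫ ≤ ‖u‖ * ‖K n u‖ := real_inner_le_norm u _
    nlinarith [norm_nonneg (K n u), norm_nonneg u]
  have hfub : ∀ k : ℕ, f k ≤ ‖u‖ ^ 2 := by
    intro k
    have h2 : f k ≤ ‖u‖ * ‖K (k : ℕ∞) u‖ := real_inner_le_norm u _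
    nlinarith [hwb (k : ℕ∞), norm_nonneg u, norm_nonneg (K (k : ℕ∞) u)]
  have hexp : ∀ k : ℕ,
      B (k : ℕ∞) (K (k : ℕ∞) u - K ⊤ u) (K (k : ℕ∞) u - K ⊤ u)
        + ‖K (k : ℕ∞) u - K ⊤ u‖ ^ 2 = f k - 2 * T + cf k := by
    intro k
    have e1 : B (k : ℕ∞) (K (k : ℕ∞) u - K ⊤ u) (K (k : ℕ∞) u - K ⊤ u)
        = B (k : ℕ∞) (K (k : ℕ∞) u) (K (k : ℕ∞) u)
          - 2 * B (k : ℕ∞) (K (k : ℕ∞) u) (K ⊤ u)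
          + B (k : ℕ∞) (K ⊤ u) (K ⊤ u) := by
      simp only [map_sub, LinearMap.sub_apply]
      rw [hsymm (k : ℕ∞) (K ⊤ u) (K (k : ℕ∞) u)]
      ring
    have e2 : ‖K (k : ℕ∞) u - K ⊤ u‖ ^ 2
        = ‖K (k : ℕ∞) u‖ ^ 2 - 2 * ⟪(K (k : ℕ∞) u : H), (K ⊤ u : H)⟫ + ‖K ⊤ u‖ ^ 2 :=
      norm_sub_sq_real _ _
    have e3 := hDform (k : ℕ∞)
    have e4 := hKrep (k : ℕ∞) u (K ⊤ u) (hwD ⊤)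
    rw [e1, e2]
    show _ = ⟪u, (K (k : ℕ∞) u : H)⟫ - 2 * ⟪u, (K ⊤ u : H)⟫
      + (B (k : ℕ∞) (K ⊤ u) (K ⊤ u) + ‖K ⊤ u‖ ^ 2)
    linarith
  have hlow : ∀ k : ℕ, 2 * T - cf k ≤ f k := by
    intro k
    have h0 : 0 ≤ B (k : ℕ∞) (K (k : ℕ∞) u - K ⊤ u) (K (k : ℕ∞) u - K ⊤ u)
        + ‖K (k : ℕ∞) u - K ⊤ u‖ ^ 2 := by
      have h1 := hpos (k : ℕ∞) _ (Submodule.sub_mem D (hwD (k : ℕ∞)) (hwD ⊤))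
      have h2 := sq_nonneg ‖K (k : ℕ∞) u - K ⊤ u‖
      linarith
    rw [hexp k] at h0
    linarith
  -- main convergence of f to T
  have hf : Tendsto f atTop (𝓝 T) := by
    apply tendsto_of_subseq_tendsto
    intro ns hns
    obtain ⟨m0, -, hm0⟩ := strictMono_subseq_of_tendsto_atTop hns
    obtain ⟨φ₁, hφ₁, v, hv⟩ := weak_seq_cpt (fun j => K ((ns ∘ m0) j : ℕ∞) u) ‖u‖
      (fun j => hwb _)
    have bdd1 : ∀ j, f ((ns ∘ m0) (φ₁ j)) ∈ Set.Icc 0 (‖u‖ ^ 2) :=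
      fun j => ⟨hfpos _, hfub _⟩
    obtain ⟨L, -, φ₂, hφ₂, hL⟩ := isCompact_Icc.tendsto_subseq bdd1
    have bdd2 : ∀ j, ‖K (((ns ∘ m0) (φ₁ (φ₂ j))) : ℕ∞) u‖ ^ 2 ∈ Set.Icc 0 (‖u‖ ^ 2) := by
      intro j
      constructor
      · positivity
      · nlinarith [hwb (((ns ∘ m0) (φ₁ (φ₂ j))) : ℕ∞), norm_nonneg u,
          norm_nonneg (K (((ns ∘ m0) (φ₁ (φ₂ j))) : ℕ∞) u)]
    obtain ⟨N, -, φ₃, hφ₃, hN⟩ := isCompact_Icc.tendsto_subseq bdd2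
    set ψ : ℕ → ℕ := fun j => (ns ∘ m0) (φ₁ (φ₂ (φ₃ j))) with hψdef
    have hψmono : StrictMono ψ := fun a b hab => hm0 (hφ₁ (hφ₂ (hφ₃ hab)))
    have hfψ : Tendsto (fun j => f (ψ j)) atTop (𝓝 L) := hL.comp hφ₃.tendsto_atTop
    have hNψ : Tendsto (fun j => ‖K (ψ j : ℕ∞) u‖ ^ 2) atTop (𝓝 N) := hN
    have hvψ : ∀ w : H, Tendsto (fun j => ⟪(K (ψ j : ℕ∞) u : H), w⟫) atTop (𝓝 ⟪v, w⟫) :=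
      fun w => (hv w).comp (hφ₂.comp hφ₃).tendsto_atTop
    -- identify inner products
    have huvL : ⟪u, v⟫ = L := by
      have h1 : Tendsto (fun j => ⟪(K (ψ j : ℕ∞) u : H), u⟫) atTop (𝓝 ⟪v, u⟫) := hvψ u
      have h2 : Tendsto (fun j => ⟪(K (ψ j : ℕ∞) u : H), u⟫) atTop (𝓝 L) := by
        refine hfψ.congr fun j => ?_
        exact real_inner_comm _ _
      rw [real_inner_comm]
      exact tendsto_nhds_unique h1 h2
    have hvN : ‖v‖ ^ 2 ≤ N := by
      have h1 : Tendsto (fun j => ⟪(K (ψ j : ℕ∞) u : H), v⟫) atTop (𝓝 (‖v‖ ^ 2)) := by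
        have := hvψ v
        rwa [real_inner_self_eq_norm_sq] at this
      have h2 : ∀ j, ⟪(K (ψ j : ℕ∞) u : H), v⟫ ≤ (‖K (ψ j : ℕ∞) u‖ ^ 2 + ‖v‖ ^ 2) / 2 := by
        intro j
        have := real_inner_le_norm (K (ψ j : ℕ∞) u) v
        nlinarith [sq_nonneg (‖K (ψ j : ℕ∞) u‖ - ‖v‖)]
      have h3 : Tendsto (fun j => (‖K (ψ j : ℕ∞) u‖ ^ 2 + ‖v‖ ^ 2) / 2) atTop
          (𝓝 ((N + ‖v‖ ^ 2) / 2)) := (hNψ.add tendsto_const_nhds).div_const 2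
      have := le_of_tendsto_of_tendsto' h1 h3 h2
      linarith
    have hBlim : Tendsto (fun j => B (ψ j : ℕ∞) (K (ψ j : ℕ∞) u) (K (ψ j : ℕ∞) u)) atTop
        (𝓝 (L - N)) := by
      refine (hfψ.sub hNψ).congr fun j => ?_
      have h := hDform (ψ j : ℕ∞)
      show f (ψ j) - ‖K (ψ j : ℕ∞) u‖ ^ 2 = _
      have hfj : f (ψ j) = ⟪u, (K (ψ j : ℕ∞) u : H)⟫ := rfl
      rw [hfj]
      linarith
    have hLN : 0 ≤ L - N :=
      ge_of_tendsto hBlim (Eventually.of_forall fun j => hpos _ _ (hwD _))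
    -- Mosco liminf along the subsequence
    have hQ := mosco_liminf_subseq (fun k => extForm (D : Set H) fun z => B (k : ℕ∞) z z)
      (extForm (D : Set H) fun z => B ⊤ z z) hMosco.1 ψ hψmono
      (fun j => K (ψ j : ℕ∞) u) v hvψ
    have hliminf : Filter.liminf
        (fun j => extForm (D : Set H) (fun z => B (ψ j : ℕ∞) z z) (K (ψ j : ℕ∞) u)) atTop
        = ENNReal.ofReal (L - N) := by
      have he : (fun j => extForm (D : Set H) (fun z => B (ψ j : ℕ∞) z z) (K (ψ j : ℕ∞) u))
          = fun j => ENNReal.ofReal (B (ψ j : ℕ∞) (K (ψ j : ℕ∞) u) (K (ψ j : ℕ∞) u)) := by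
        funext j
        exact if_pos (hwD _)
      rw [he]
      exact (ENNReal.tendsto_ofReal hBlim).liminf_eq
    rw [hliminf] at hQ
    have hQ' : (if v ∈ (D : Set H) then ENNReal.ofReal (B ⊤ v v) else ⊤)
        ≤ ENNReal.ofReal (L - N) := hQ
    have hvD : v ∈ D := by
      by_contra hvD
      have hvD' : v ∉ (D : Set H) := hvD
      rw [if_neg hvD'] at hQ'
      exact (ENNReal.ofReal_ne_top) (top_le_iff.mp hQ')
    rw [if_pos (show v ∈ (D : Set H) from hvD)] at hQ'
    have hBv : B ⊤ v v ≤ L - N := (ENNReal.ofReal_le_ofReal_iff hLN).mp hQ'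
    -- minimality of K ⊤ u
    have hmin : -T ≤ B ⊤ v v + ‖v‖ ^ 2 - 2 * ⟪u, v⟫ := by
      have h0 : 0 ≤ B ⊤ (v - K ⊤ u) (v - K ⊤ u) + ‖v - K ⊤ u‖ ^ 2 := by
        have h1 := hpos ⊤ _ (Submodule.sub_mem D hvD (hwD ⊤))
        have h2 := sq_nonneg ‖v - K ⊤ u‖
        linarith
      have e1 : B ⊤ (v - K ⊤ u) (v - K ⊤ u)
          = B ⊤ v v - 2 * B ⊤ (K ⊤ u) v + B ⊤ (K ⊤ u) (K ⊤ u) := by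
        simp only [map_sub, LinearMap.sub_apply]
        rw [hsymm ⊤ v (K ⊤ u)]
        ring
      have e2 : ‖v - K ⊤ u‖ ^ 2
          = ‖v‖ ^ 2 - 2 * ⟪v, (K ⊤ u : H)⟫ + ‖K ⊤ u‖ ^ 2 := norm_sub_sq_real _ _
      have e3 := hKrep ⊤ u v hvD
      have e4 := hDform ⊤
      have e5 : ⟪v, (K ⊤ u : H)⟫ = ⟪(K ⊤ u : H), v⟫ := real_inner_comm _ _
      rw [e1, e2] at h0
      rw [hT]
      linarith
    have hLT : L ≤ T := by rw [huvL] at hmin; linarith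
    have hTL : T ≤ L := by
      have h1 : Tendsto (fun j => 2 * T - cf (ψ j)) atTop (𝓝 (2 * T - T)) :=
        tendsto_const_nhds.sub (hcf.comp hψmono.tendsto_atTop)
      have h2 := le_of_tendsto_of_tendsto' h1 hfψ (fun j => hlow (ψ j))
      linarith
    have hLTeq : L = T := le_antisymm hLT hTL
    exact ⟨m0 ∘ φ₁ ∘ φ₂ ∘ φ₃, hLTeq ▸ hfψ⟩
  -- conclude
  have goal1 : Tendsto (fun k : ℕ =>
      B (k : ℕ∞) (K (k : ℕ∞) u - K ⊤ u) (K (k : ℕ∞) u - K ⊤ u)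
        + ‖K (k : ℕ∞) u - K ⊤ u‖ ^ 2) atTop (𝓝 0) := by
    have h := (hf.sub (tendsto_const_nhds (x := 2 * T))).add hcf
    have heq : T - 2 * T + T = 0 := by ring
    rw [heq] at h
    exact h.congr fun k => (hexp k).symm
  refine ⟨goal1, ?_⟩
  rw [tendsto_iff_norm_sub_tendsto_zero]
  have hdkD : ∀ k : ℕ, K (k : ℕ∞) u - K ⊤ u ∈ D :=
    fun k => Submodule.sub_mem D (hwD _) (hwD ⊤)
  refine squeeze_zero (g := fun k : ℕ => |M| * Real.sqrt ((max c 1) *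
      (B (k : ℕ∞) (K (k : ℕ∞) u - K ⊤ u) (K (k : ℕ∞) u - K ⊤ u)
        + ‖K (k : ℕ∞) u - K ⊤ u‖ ^ 2)))
    (fun k => norm_nonneg _) ?_ ?_
  · intro k
    set d : H := K (k : ℕ∞) u - K ⊤ u with hd
    have h1 : ‖J (K (k : ℕ∞) u) - J (K ⊤ u)‖ = ‖J d‖ := by rw [hd, map_sub]
    rw [h1]
    refine (hA2 d (hdkD k)).trans ?_
    have hBd : 0 ≤ B (k : ℕ∞) d d := hpos _ _ (hdkD k)
    have hs1 : Bbase d d + ‖d‖ ^ 2 ≤ (max c 1) * (B (k : ℕ∞) d d + ‖d‖ ^ 2) := by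
      have hA := (hA1 (k : ℕ∞) d (hdkD k)).1
      have hBb : Bbase d d ≤ c * B (k : ℕ∞) d d := by
        have := mul_le_mul_of_nonneg_left hA (le_of_lt hc)
        rwa [mul_inv_cancel_left₀ (ne_of_gt hc)] at this
      have hm1 : c ≤ max c 1 := le_max_left _ _
      have hm2 : (1 : ℝ) ≤ max c 1 := le_max_right _ _
      nlinarith [sq_nonneg ‖d‖]
    calc M * Real.sqrt (Bbase d d + ‖d‖ ^ 2)
        ≤ |M| * Real.sqrt (Bbase d d + ‖d‖ ^ 2) :=
          mul_le_mul_of_nonneg_right (le_abs_self M) (Real.sqrt_nonneg _)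
      _ ≤ |M| * Real.sqrt ((max c 1) * (B (k : ℕ∞) d d + ‖d‖ ^ 2)) :=
          mul_le_mul_of_nonneg_left (Real.sqrt_le_sqrt hs1) (abs_nonneg M)
  · have h1 := goal1.const_mul (max c 1)
    rw [mul_zero] at h1
    have h2 := (Real.continuous_sqrt.tendsto 0).comp h1
    rw [Real.sqrt_zero] at h2
    have h3 := h2.const_mul |M|
    rw [mul_zero] at h3
    exact h3.congr fun k => by simp [Function.comp]
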